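/- Let (C, ▷, ‡) be a model of guarded recursive terms where C is cartesian closed. Then the operator †_{X,Y} : C(▷X × Y, X) → C(Y,X) defined by f† = uncurry([curry(f ∘ ⟨(▷ev) ∘ i ∘ (p_Y × ▷(X^Y)), π_ℓ⟩)]^‡) (currying through the exponential X^Y and using the unguarded unique fixpoint ‡ at the object X^Y) satisfies the parametrized guarded fixpoint identity: f† = f ∘ (p_X × id_Y) ∘ ⟨f†, id_Y⟩ for every f : ▷X × Y → X. -/

import Mathlib

open CategoryTheory CategoryTheory.Limits CategoryTheory.MonoidalCategory
open CategoryTheory.CartesianMonoidalCategory CategoryTheory.CartesianClosed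

/-- Let `(C, ▷, ‡)` be a model of guarded recursive terms (`C` with finite limits, `▷` a
pointed endofunctor preserving finite limits, `‡` assigning to each `f : ▷X → X` the
unique global element `f‡ : 1 → X` with `f‡ = f ∘ p_X ∘ f‡`), with `C` cartesian closed.
Then the parametrized operator `†` defined by currying through the exponential `X^Y` and
applying `‡` at `X^Y` satisfies the guarded fixpoint identity
`f† = f ∘ (p_X × id_Y) ∘ ⟨f†, id_Y⟩`. -/
theorem stmt19 {C : Type*} [Category C] [CartesianMonoidalCategory C] [HasFiniteLimits C]
    [MonoidalClosed C]
    (F : C ⥤ C) [PreservesFiniteLimits F] (p : 𝟭 C ⟶ F)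
    (dag : ∀ {Z : C}, (F.obj Z ⟶ Z) → (𝟙_ C ⟶ Z))
    (hfix : ∀ {Z : C} (g : F.obj Z ⟶ Z), dag g = dag g ≫ p.app Z ≫ g)
    (huniq : ∀ {Z : C} (g : F.obj Z ⟶ Z) (t : 𝟙_ C ⟶ Z),
      t = t ≫ p.app Z ≫ g → t = dag g) :
    ∀ {X Y : C} (f : F.obj X ⊗ Y ⟶ X),
      let E := Y ⟹ X
      let inner : Y ⊗ F.obj E ⟶ F.obj X :=
        (p.app Y ⊗ₘ 𝟙 (F.obj E)) ≫ inv (prodComparison F Y E) ≫ F.map ((ihom.ev Y).app X)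
      let fdag : Y ⟶ X :=
        lift (𝟙 Y) (toUnit Y ≫ dag (MonoidalClosed.curry (lift inner (fst Y (F.obj E)) ≫ f))) ≫
          (ihom.ev Y).app X
      fdag = lift fdag (𝟙 Y) ≫ (p.app X ⊗ₘ 𝟙 Y) ≫ f := by
  intro X Y f E inner fdag
  set g : F.obj E ⟶ E := MonoidalClosed.curry (lift inner (fst Y (F.obj E)) ≫ f) with hg
  set q : Y ⟶ Y ⊗ E := lift (𝟙 Y) (toUnit Y ≫ dag g) with hq
  have hfd : fdag = q ≫ (ihom.ev Y).app X := rfl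
  set h : Y ⟶ Y ⊗ F.obj E := lift (𝟙 Y) (toUnit Y ≫ dag g ≫ p.app E) with hh
  -- step 1: unfold the fixpoint once
  have step1 : fdag = h ≫ lift inner (fst Y (F.obj E)) ≫ f := by
    have e1 : q = h ≫ (Y ◁ g) := by
      rw [hq, hh]
      apply CartesianMonoidalCategory.hom_ext
      · simp only [lift_fst, Category.assoc, whiskerLeft_fst, lift_fst]
      · simp only [lift_snd, Category.assoc, whiskerLeft_snd, lift_snd_assoc]
        conv_lhs => rw [hfix g]
    have e2 : (Y ◁ g) ≫ (ihom.ev Y).app X = MonoidalClosed.uncurry g := (MonoidalClosed.uncurry_eq g).symm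
    rw [hfd, e1, Category.assoc, e2, hg, MonoidalClosed.uncurry_curry]
  -- step 2: compute h ≫ inner
  have nat_fst : p.app (Y ⊗ E) ≫ F.map (fst Y E) = fst Y E ≫ p.app Y := (p.naturality _).symm
  have nat_snd : p.app (Y ⊗ E) ≫ F.map (snd Y E) = snd Y E ≫ p.app E := (p.naturality _).symm
  have hqp : h ≫ (p.app Y ⊗ₘ 𝟙 (F.obj E)) = q ≫ p.app (Y ⊗ E) ≫ prodComparison F Y E := by
    apply CartesianMonoidalCategory.hom_ext <;>
      simp [hh, hq, CartesianMonoidalCategory.prodComparison_fst, CartesianMonoidalCategory.prodComparison_snd,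
        reassoc_of% nat_fst, reassoc_of% nat_snd, nat_fst, nat_snd]
  have step2 : h ≫ inner = fdag ≫ p.app X := by
    show h ≫ (p.app Y ⊗ₘ 𝟙 (F.obj E)) ≫ inv (prodComparison F Y E) ≫ F.map ((ihom.ev Y).app X)
        = fdag ≫ p.app X
    rw [← Category.assoc, hqp, Category.assoc, Category.assoc,
      IsIso.hom_inv_id_assoc]
    have nat_ev : p.app (Y ⊗ E) ≫ F.map ((ihom.ev Y).app X) = (ihom.ev Y).app X ≫ p.app X :=
      (p.naturality _).symm
    rw [hfd, Category.assoc, nat_ev]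
  -- combine
  have hlift : h ≫ lift inner (fst Y (F.obj E)) = lift fdag (𝟙 Y) ≫ (p.app X ⊗ₘ 𝟙 Y) := by
    apply CartesianMonoidalCategory.hom_ext
    · simpa using step2
    · simp [hh]
  conv_lhs => rw [step1, ← Category.assoc, hlift, Category.assoc]
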